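/- For d ≥ 5 and λ = 4−d, the function f₁(r) = 1/(d−4+r²) solves the ODE (r²−1)f'' + ((2(λ+d−1)r² + 1−d)/r)·f' + ((λ+d−1)(λ+d−2) + V(r))·f = 0 on (0,1), where V(r) = −8(d−3)(d−4)/(d−4+r²)². -/

import Mathlib

open Real

lemma denom_pos {c : ℝ} (hc : 1 ≤ c) (r : ℝ) : 0 < c + r ^ 2 := by positivity

lemma hasDerivAt_f1 {c : ℝ} (hc : 1 ≤ c) (r : ℝ) :
    HasDerivAt (fun x : ℝ => 1 / (c + x ^ 2)) (-(2 * r) / (c + r ^ 2) ^ 2) r := by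
  have h : HasDerivAt (fun x : ℝ => c + x ^ 2) (2 * r) r := by
    simpa using (hasDerivAt_pow 2 r).const_add c
  have := h.inv (ne_of_gt (denom_pos hc r))
  simpa [one_div, Pi.inv_def] using this

lemma deriv_f1 {c : ℝ} (hc : 1 ≤ c) :
    deriv (fun x : ℝ => 1 / (c + x ^ 2)) = fun x => -(2 * x) / (c + x ^ 2) ^ 2 := by
  ext r; exact (hasDerivAt_f1 hc r).deriv

lemma hasDerivAt_f1' {c : ℝ} (hc : 1 ≤ c) (r : ℝ) :
    HasDerivAt (fun x : ℝ => -(2 * x) / (c + x ^ 2) ^ 2)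
      ((-2 * (c + r ^ 2) ^ 2 - (-(2 * r)) * (2 * (c + r ^ 2) * (2 * r))) / ((c + r ^ 2) ^ 2) ^ 2)
      r := by
  have hnum : HasDerivAt (fun x : ℝ => -(2 * x)) (-2) r := by
    simpa [Pi.neg_def] using ((hasDerivAt_id r).const_mul (2 : ℝ)).neg
  have h : HasDerivAt (fun x : ℝ => c + x ^ 2) (2 * r) r := by
    simpa using (hasDerivAt_pow 2 r).const_add c
  have hden : HasDerivAt (fun x : ℝ => (c + x ^ 2) ^ 2) (2 * (c + r ^ 2) * (2 * r)) r := by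
    have := (h.pow 2)
    simpa [mul_comm, mul_assoc, mul_left_comm, Pi.pow_def] using this
  exact hnum.div hden (by positivity)

theorem f1_solves_ode (d : ℕ) (hd : 5 ≤ d)
    (f₁ : ℝ → ℝ) (hf₁ : ∀ r : ℝ, f₁ r = 1 / ((d : ℝ) - 4 + r ^ 2))
    (V : ℝ → ℝ)
    (hV : ∀ r : ℝ, V r = -8 * ((d : ℝ) - 3) * ((d : ℝ) - 4) / ((d : ℝ) - 4 + r ^ 2) ^ 2) :
    ∀ r ∈ Set.Ioo (0 : ℝ) 1,
      (r ^ 2 - 1) * deriv (deriv f₁) r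
        + ((2 * (((4 : ℝ) - d) + d - 1) * r ^ 2 + 1 - d) / r) * deriv f₁ r
        + ((((4 : ℝ) - d) + d - 1) * (((4 : ℝ) - d) + d - 2) + V r) * f₁ r = 0 := by
  intro r hr
  set c : ℝ := (d : ℝ) - 4 with hcdef
  have hc : 1 ≤ c := by
    have : (5 : ℝ) ≤ (d : ℝ) := by exact_mod_cast hd
    simp [hcdef]; linarith
  have hfun : f₁ = fun x : ℝ => 1 / (c + x ^ 2) := funext hf₁
  have hD : (0 : ℝ) < c + r ^ 2 := denom_pos hc r
  have h1 : deriv f₁ r = -(2 * r) / (c + r ^ 2) ^ 2 := by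
    rw [hfun]; exact (hasDerivAt_f1 hc r).deriv
  have h2 : deriv (deriv f₁) r
      = (-2 * (c + r ^ 2) ^ 2 - (-(2 * r)) * (2 * (c + r ^ 2) * (2 * r))) / ((c + r ^ 2) ^ 2) ^ 2 := by
    rw [hfun, deriv_f1 hc]
    exact (hasDerivAt_f1' hc r).deriv
  rw [h1, h2, hf₁ r, hV r]
  have hd4 : (d : ℝ) = c + 4 := by simp [hcdef]
  rw [hd4]
  have hr0 : r ≠ 0 := ne_of_gt hr.1
  have hD0 : c + r ^ 2 ≠ 0 := ne_of_gt hD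
  field_simp
  ring
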